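/- arXiv:1405.0293 — 2 statements merged into one kernel-verified Lean document; each statement's English description precedes it below -/
import Mathlib

section
/- In any Kripke model and at any world, the formula ◇^p □^q φ ⇒ □^r ◇^s φ is satisfied for all φ and all valuations over a frame (W, R) if and only if the frame satisfies the generalized Church-Rosser condition: ∀w₀ w₁ w₂, (w₀ R^p w₁ ∧ w₀ R^r w₂) → ∃w₃, (w₁ R^q w₃ ∧ w₂ R^s w₃), where R^0 is the identity relation and R^{i+1} = R ∘ R^i. -/
def box {W : Type*} (R : W → W → Prop) (φ : W → Prop) (w : W) : Prop :=
  ∀ w', R w w' → φ w'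

def dia {W : Type*} (R : W → W → Prop) (φ : W → Prop) (w : W) : Prop :=
  ¬ box R (fun w' => ¬ φ w') w

def boxn {W : Type*} (R : W → W → Prop) : ℕ → (W → Prop) → (W → Prop)
  | 0, φ => φ
  | (i+1), φ => box R (boxn R i φ)

def dian {W : Type*} (R : W → W → Prop) : ℕ → (W → Prop) → (W → Prop)
  | 0, φ => φ
  | (i+1), φ => dia R (dian R i φ)

def iterR {W : Type*} (R : W → W → Prop) : ℕ → W → W → Prop
  | 0, w, w' => w = w'
  | (i+1), w, w' => ∃ w'', R w w'' ∧ iterR R i w'' w'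

lemma boxn_iff {W : Type*} (R : W → W → Prop) (n : ℕ) (φ : W → Prop) (w : W) :
    boxn R n φ w ↔ ∀ w', iterR R n w w' → φ w' := by
  induction n generalizing w with
  | zero =>
    simp only [boxn, iterR]
    exact ⟨fun h w' e => e ▸ h, fun h => h w rfl⟩
  | succ n ih =>
    simp only [boxn, box, iterR, ih]
    constructor
    · rintro h w' ⟨u, hu, hit⟩; exact h u hu w' hit
    · intro h u hu w' hit; exact h w' ⟨u, hu, hit⟩

lemma dian_iff {W : Type*} (R : W → W → Prop) (n : ℕ) (φ : W → Prop) (w : W) :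
    dian R n φ w ↔ ∃ w', iterR R n w w' ∧ φ w' := by
  induction n generalizing w with
  | zero =>
    simp only [dian, iterR]
    exact ⟨fun h => ⟨w, rfl, h⟩, fun ⟨w', e, h⟩ => e ▸ h⟩
  | succ n ih =>
    simp only [dian, dia, box, iterR, ih]
    push_neg
    constructor
    · rintro ⟨u, hu, w', hit, h⟩; exact ⟨w', ⟨u, hu, hit⟩, h⟩
    · rintro ⟨w', ⟨u, hu, hit⟩, h⟩; exact ⟨u, hu, w', hit, h⟩

theorem geach_iff_churchRosser {W : Type*} [Nonempty W] (R : W → W → Prop)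
    (p q r s : ℕ) :
    (∀ φ : W → Prop, ∀ w : W, dian R p (boxn R q φ) w → boxn R r (dian R s φ) w) ↔
      (∀ w₀ w₁ w₂, iterR R p w₀ w₁ ∧ iterR R r w₀ w₂ →
        ∃ w₃, iterR R q w₁ w₃ ∧ iterR R s w₂ w₃) := by
  constructor
  · intro h w₀ w₁ w₂ ⟨hp, hr⟩
    have key := h (fun x => iterR R q w₁ x) w₀ ?_
    · rw [boxn_iff] at key
      have := key w₂ hr
      rw [dian_iff] at this
      obtain ⟨w₃, hs, hq⟩ := this
      exact ⟨w₃, hq, hs⟩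
    · rw [dian_iff]
      exact ⟨w₁, hp, by rw [boxn_iff]; exact fun w' hw' => hw'⟩
  · intro h φ w hw
    rw [dian_iff] at hw
    obtain ⟨w₁, hp, hb⟩ := hw
    rw [boxn_iff] at hb
    rw [boxn_iff]
    intro w₂ hr
    rw [dian_iff]
    obtain ⟨w₃, hq, hs⟩ := h w w₁ w₂ ⟨hp, hr⟩
    exact ⟨w₃, hs, hb w₃ hq⟩
end

section
/- The rule NEC1 is sound: in any Kripke model, if the clauses (l'₁ ⇒ □_a ¬l₁), ..., (l'_m ⇒ □_a ¬l_m), (l' ⇒ ¬□_a l), and (⊤ ⇒ l₁ ∨ ... ∨ l_m ∨ l) all hold at every world, then (¬l'₁ ∨ ... ∨ ¬l'_m ∨ ¬l') holds at every world. -/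
theorem nec1_sound {W : Type*} (Ra : W → W → Prop) (m : ℕ)
    (l l' : W → Prop) (li li' : Fin m → W → Prop)
    (h1 : ∀ i : Fin m, ∀ w, li' i w → box Ra (fun w' => ¬ li i w') w)
    (h2 : ∀ w, l' w → ¬ box Ra l w)
    (h3 : ∀ w, (∃ i : Fin m, li i w) ∨ l w) :
    ∀ w, (∃ i : Fin m, ¬ li' i w) ∨ ¬ l' w := by
  intro w
  by_contra h
  push_neg at h
  obtain ⟨hli', hl'⟩ := h
  apply h2 w hl'
  intro w' hR
  rcases h3 w' with ⟨i, hi⟩ | hl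
  · exact absurd hi (h1 i w (hli' i) w' hR)
  · exact hl
end
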